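/- The tensor product with a fixed convex bornological vector space V is left adjoint to the inner hom: for convex bornological vector spaces U, V, W there is a natural bijection between bounded linear maps U ⊗ V → W (with the tensor product bornology on U ⊗ V) and bounded linear maps U → Hom(V, W) (with the equibounded bornology on Hom(V, W)), given by currying. -/

import Mathlib

open scoped Pointwise

/-- A convex vector space bornology on a real vector space `V`. -/
structure VecBornology (V : Type*) [AddCommGroup V] [Module ℝ V] where
  IsBounded : Set V → Prop
  subset_mem : ∀ {A B : Set V}, A ⊆ B → IsBounded B → IsBounded A
  union_mem : ∀ {A B : Set V}, IsBounded A → IsBounded B → IsBounded (A ∪ B)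
  singleton_mem : ∀ v : V, IsBounded {v}
  add_mem : ∀ {A B : Set V}, IsBounded A → IsBounded B → IsBounded (A + B)
  smul_mem : ∀ (c : ℝ) {A : Set V}, IsBounded A → IsBounded (c • A)
  balancedHull_mem : ∀ {A : Set V}, IsBounded A → IsBounded (balancedHull ℝ A)
  convexHull_mem : ∀ {A : Set V}, IsBounded A → IsBounded (convexHull ℝ A)

/-- Mackey convergence of a sequence `u` to `v` with respect to a collection of
bounded sets: there is a bounded disk `D` such that for every `ε > 0` eventually
`u n - v ∈ ε • D`. -/
def MackeyConvTo {V : Type*} [AddCommGroup V] [Module ℝ V]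
    (Bdd : Set V → Prop) (u : ℕ → V) (v : V) : Prop :=
  ∃ D : Set V, Bdd D ∧ Balanced ℝ D ∧ Convex ℝ D ∧
    ∀ ε : ℝ, 0 < ε → ∃ N : ℕ, ∀ n ≥ N, u n - v ∈ ε • D

open TensorProduct in
/-- Tensor-hom adjunction for bornological vector spaces: currying gives a
bijection between bounded linear maps `U ⊗ V → W` (tensor product bornology)
and bounded linear maps `U → Hom(V, W)` (equibounded bornology). -/
theorem stmt_7 {U V W : Type*} [AddCommGroup U] [Module ℝ U] [AddCommGroup V] [Module ℝ V]
    [AddCommGroup W] [Module ℝ W]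
    (βU : VecBornology U) (βV : VecBornology V) (βW : VecBornology W) :
    ∃ e : {f : U ⊗[ℝ] V →ₗ[ℝ] W //
            ∀ S : Set (U ⊗[ℝ] V),
              (∃ (A : Set U) (B : Set V), βU.IsBounded A ∧ βV.IsBounded B ∧
                S ⊆ convexHull ℝ (Set.image2 (fun u v => u ⊗ₜ[ℝ] v) A B)) →
              βW.IsBounded (f '' S)} ≃
        {g : U →ₗ[ℝ] V →ₗ[ℝ] W //
            ∀ (A : Set U) (B : Set V), βU.IsBounded A → βV.IsBounded B →
              βW.IsBounded {w | ∃ u ∈ A, ∃ v ∈ B, w = g u v}},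
      ∀ (f : {f : U ⊗[ℝ] V →ₗ[ℝ] W //
            ∀ S : Set (U ⊗[ℝ] V),
              (∃ (A : Set U) (B : Set V), βU.IsBounded A ∧ βV.IsBounded B ∧
                S ⊆ convexHull ℝ (Set.image2 (fun u v => u ⊗ₜ[ℝ] v) A B)) →
              βW.IsBounded (f '' S)}) (u : U) (v : V),
        (e f).1 u v = f.1 (u ⊗ₜ[ℝ] v) := by
  refine ⟨⟨fun f => ⟨(TensorProduct.lift.equiv (RingHom.id ℝ) U V W).symm f.1, ?_⟩,
      fun g => ⟨TensorProduct.lift g.1, ?_⟩, ?_, ?_⟩, ?_⟩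
  · intro A B hA hB
    have h := f.2 (Set.image2 (fun u v => u ⊗ₜ[ℝ] v) A B)
      ⟨A, B, hA, hB, subset_convexHull ℝ _⟩
    refine βW.subset_mem ?_ h
    rintro w ⟨u, hu, v, hv, rfl⟩
    exact ⟨u ⊗ₜ[ℝ] v, ⟨u, hu, v, hv, rfl⟩, by simp⟩
  · rintro S ⟨A, B, hA, hB, hS⟩
    have hbase : βW.IsBounded
        (TensorProduct.lift g.1 '' Set.image2 (fun u v => u ⊗ₜ[ℝ] v) A B) := by
      refine βW.subset_mem ?_ (g.2 A B hA hB)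
      rintro w ⟨_, ⟨u, hu, v, hv, rfl⟩, rfl⟩
      exact ⟨u, hu, v, hv, by simp⟩
    refine βW.subset_mem ?_ (βW.convexHull_mem hbase)
    calc TensorProduct.lift g.1 '' S
        ⊆ TensorProduct.lift g.1 ''
            convexHull ℝ (Set.image2 (fun u v => u ⊗ₜ[ℝ] v) A B) :=
          Set.image_mono hS
      _ = convexHull ℝ (TensorProduct.lift g.1 ''
            Set.image2 (fun u v => u ⊗ₜ[ℝ] v) A B) :=
          (TensorProduct.lift g.1).image_convexHull _
  · intro f
    ext : 1
    exact TensorProduct.ext' fun u v => by simp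
  · intro g
    ext : 1
    exact LinearMap.ext₂ fun u v => by simp
  · intro f u v
    rfl
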